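/- Let X be a nonnegative real-valued random variable on a probability space such that X and X² are integrable, with mean μ = E[X] > 0 and variance σ² = Var(X). Then the Jensen gap J = E[e^{−X}] − e^{−μ} satisfies 0 ≤ J ≤ σ²(1 − e^{−μ} − μe^{−μ})/μ². -/

import Mathlib

open MeasureTheory ProbabilityTheory

/-- Pointwise quadratic upper bound for `exp (-x)` on `[0, ∞)` tangent at `m`
and matching at `0`. -/
lemma jensen_gap_pointwise {m : ℝ} (hm : 0 < m) {x : ℝ} (hx : 0 ≤ x) :
    Real.exp (-x) ≤ Real.exp (-m) - Real.exp (-m) * (x - m) +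
      ((1 - Real.exp (-m) - m * Real.exp (-m)) / m ^ 2) * (x - m) ^ 2 := by
  set A : ℝ := 1 - Real.exp (-m) - m * Real.exp (-m) with hA_def
  set C : ℝ := A / m ^ 2 with hC_def
  have hem : (0:ℝ) < Real.exp (-m) := Real.exp_pos _
  have hprod : Real.exp (-m) * Real.exp m = 1 := by
    rw [← Real.exp_add]; simp
  have hA : 0 < A := by
    have h1 : m + 1 < Real.exp m := Real.add_one_lt_exp hm.ne'
    nlinarith
  have hm2 : (0:ℝ) < m ^ 2 := by positivity
  have hC : 0 < C := div_pos hA hm2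
  have hC2 : Real.exp (-m) ≤ 2 * C := by
    have hq : 1 + m + m ^ 2 / 2 ≤ Real.exp m := Real.quadratic_le_exp_of_nonneg hm.le
    have h2 : Real.exp (-m) * m ^ 2 ≤ 2 * A := by nlinarith
    have := (div_le_div_iff_of_pos_right hm2).mpr h2
    rw [hC_def]
    calc Real.exp (-m) = Real.exp (-m) * m ^ 2 / m ^ 2 := by field_simp
      _ ≤ 2 * A / m ^ 2 := this
      _ = 2 * (A / m ^ 2) := by ring
  have h2C : (0:ℝ) < 2 * C := by linarith
  -- the function and its derivatives
  set f : ℝ → ℝ := fun x => Real.exp (-m) - Real.exp (-m) * (x - m) + C * (x - m) ^ 2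
    - Real.exp (-x) with hf_def
  set f' : ℝ → ℝ := fun x => -Real.exp (-m) + 2 * C * (x - m) + Real.exp (-x) with hf'_def
  have hder : ∀ y : ℝ, HasDerivAt f (f' y) y := by
    intro y
    have he : HasDerivAt (fun x : ℝ => Real.exp (-x)) (-Real.exp (-y)) y := by
      simpa [Function.comp_def] using (Real.hasDerivAt_exp (-y)).comp y (hasDerivAt_neg y)
    have h1 : HasDerivAt (fun x : ℝ => Real.exp (-m) - Real.exp (-m) * (x - m)
        + C * (x - m) ^ 2) (-Real.exp (-m) + 2 * C * (y - m)) y := by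
      have hx : HasDerivAt (fun x : ℝ => x - m) 1 y := (hasDerivAt_id y).sub_const m
      have hsq : HasDerivAt (fun x : ℝ => (x - m) ^ 2) (2 * (y - m)) y := by
        simpa [Pi.pow_def] using hx.pow 2
      have := ((hx.const_mul (Real.exp (-m))).const_sub (Real.exp (-m))).add
        (hsq.const_mul C)
      exact this.congr_deriv (by ring)
    have := h1.sub he
    exact this.congr_deriv (by simp only [hf'_def]; ring)
  have hder' : ∀ y : ℝ, HasDerivAt f' (2 * C - Real.exp (-y)) y := by
    intro y
    have he : HasDerivAt (fun x : ℝ => Real.exp (-x)) (-Real.exp (-y)) y := by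
      simpa [Function.comp_def] using (Real.hasDerivAt_exp (-y)).comp y (hasDerivAt_neg y)
    have hx : HasDerivAt (fun x : ℝ => x - m) 1 y := (hasDerivAt_id y).sub_const m
    have h1 : HasDerivAt (fun x : ℝ => -Real.exp (-m) + 2 * C * (x - m)) (2 * C) y := by
      simpa using (hx.const_mul (2 * C)).const_add (-Real.exp (-m))
    have := h1.add he
    exact this.congr_deriv (by ring)
  have hfc : Continuous f := by
    have : Continuous fun x : ℝ => Real.exp (-x) := Real.continuous_exp.comp continuous_neg
    fun_prop
  have hfm : f m = 0 := by simp [hf_def]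
  have hf'm : f' m = 0 := by simp [hf'_def]
  have hf0 : f 0 = 0 := by
    have : C * (0 - m) ^ 2 = A := by
      rw [hC_def]; field_simp; ring
    simp only [hf_def]
    rw [this, hA_def]
    try simp
    try ring
  -- the switch point
  set s : ℝ := max 0 (-Real.log (2 * C)) with hs_def
  have hs0 : 0 ≤ s := le_max_left _ _
  have hsm : s ≤ m := by
    refine max_le hm.le ?_
    have : -m ≤ Real.log (2 * C) := by
      rw [Real.le_log_iff_exp_le h2C]
      exact hC2
    linarith
  have hexp_le : ∀ y : ℝ, s ≤ y → Real.exp (-y) ≤ 2 * C := by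
    intro y hy
    have h1 : -Real.log (2 * C) ≤ y := le_trans (le_max_right _ _) hy
    calc Real.exp (-y) ≤ Real.exp (Real.log (2 * C)) := by
          apply Real.exp_le_exp.mpr; linarith
      _ = 2 * C := Real.exp_log h2C
  -- f' is monotone on [s, ∞)
  have hmono' : MonotoneOn f' (Set.Ici s) := by
    apply monotoneOn_of_hasDerivWithinAt_nonneg (convex_Ici s)
      (fun y _ => (hder' y).continuousAt.continuousWithinAt)
      (fun y _ => (hder' y).hasDerivWithinAt)
    intro y hy
    rw [interior_Ici] at hy
    have := hexp_le y (le_of_lt hy)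
    linarith
  -- f is monotone on [m, ∞)
  have hmonof : MonotoneOn f (Set.Ici m) := by
    apply monotoneOn_of_hasDerivWithinAt_nonneg (convex_Ici m)
      hfc.continuousOn (fun y _ => (hder y).hasDerivWithinAt)
    intro y hy
    rw [interior_Ici] at hy
    have : f' m ≤ f' y := hmono' (Set.mem_Ici.mpr hsm) (Set.mem_Ici.mpr (hsm.trans hy.le)) hy.le
    rw [hf'm] at this; exact this
  -- f is antitone on [s, m]
  have hantif : AntitoneOn f (Set.Icc s m) := by
    apply antitoneOn_of_hasDerivWithinAt_nonpos (convex_Icc s m)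
      hfc.continuousOn (fun y _ => (hder y).hasDerivWithinAt)
    intro y hy
    rw [interior_Icc] at hy
    have : f' y ≤ f' m := hmono' (Set.mem_Ici.mpr hy.1.le) (Set.mem_Ici.mpr hsm) hy.2.le
    rw [hf'm] at this; exact this
  -- conclusion: f x ≥ 0 on [0, ∞)
  have hfs : 0 ≤ f s := by
    have := hantif (Set.mem_Icc.mpr ⟨le_refl s, hsm⟩) (Set.mem_Icc.mpr ⟨hsm, le_refl m⟩) hsm
    rw [hfm] at this; exact this
  have hfinal : 0 ≤ f x := by
    rcases le_or_gt m x with h | h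
    · have := hmonof (Set.mem_Ici.mpr (le_refl m)) (Set.mem_Ici.mpr h) h
      rw [hfm] at this; exact this
    rcases le_or_gt s x with h2 | h2
    · have := hantif (Set.mem_Icc.mpr ⟨h2, h.le⟩) (Set.mem_Icc.mpr ⟨hsm, le_refl m⟩) h.le
      rw [hfm] at this; exact this
    · -- 0 ≤ x < s : use concavity on [0, s]
      have hspos : 0 < s := lt_of_le_of_lt hx h2
      have hsval : s = -Real.log (2 * C) := by
        rcases max_cases (0:ℝ) (-Real.log (2 * C)) with ⟨h1, _⟩ | ⟨h1, _⟩
        · rw [hs_def] at hspos; rw [h1] at hspos; exact absurd hspos (lt_irrefl 0)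
        · rw [hs_def, h1]
      have hconc : ConcaveOn ℝ (Set.Icc 0 s) f := by
        apply concaveOn_of_hasDerivWithinAt2_nonpos (convex_Icc 0 s)
          hfc.continuousOn (fun y _ => (hder y).hasDerivWithinAt)
          (fun y _ => (hder' y).hasDerivWithinAt)
        intro y hy
        rw [interior_Icc] at hy
        have h3 : -y > -s := by linarith [hy.2]
        have : Real.exp (-s) ≤ Real.exp (-y) := Real.exp_le_exp.mpr h3.le
        have h4 : Real.exp (-s) = 2 * C := by
          rw [hsval, neg_neg, Real.exp_log h2C]
        linarith
      have hseg : x ∈ segment ℝ (0:ℝ) s := by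
        rw [segment_eq_Icc hs0]
        exact Set.mem_Icc.mpr ⟨hx, h2.le⟩
      have := hconc.ge_on_segment (Set.mem_Icc.mpr ⟨le_refl 0, hs0⟩)
        (Set.mem_Icc.mpr ⟨hs0, le_refl s⟩) hseg
      rw [hf0] at this
      exact le_trans (le_min (le_refl 0) hfs) this
  have : 0 ≤ Real.exp (-m) - Real.exp (-m) * (x - m) + C * (x - m) ^ 2 - Real.exp (-x) :=
    hfinal
  linarith

/-- the Jensen gap J = E[e^{−X}] − e^{−μ} satisfies
0 ≤ J ≤ σ²(1 − e^{−μ} − μe^{−μ})/μ². -/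
theorem stmt_2 {Ω : Type*} [MeasurableSpace Ω] (P : Measure Ω) [IsProbabilityMeasure P]
    (X : Ω → ℝ) (hXnn : ∀ ω, 0 ≤ X ω)
    (hX1 : Integrable X P) (hX2 : Integrable (fun ω => X ω ^ 2) P)
    (hmean : 0 < ∫ ω, X ω ∂P) :
    0 ≤ (∫ ω, Real.exp (-X ω) ∂P) - Real.exp (-(∫ ω, X ω ∂P)) ∧
      (∫ ω, Real.exp (-X ω) ∂P) - Real.exp (-(∫ ω, X ω ∂P)) ≤
        variance X P *
          (1 - Real.exp (-(∫ ω, X ω ∂P)) -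
            (∫ ω, X ω ∂P) * Real.exp (-(∫ ω, X ω ∂P))) / (∫ ω, X ω ∂P)^2 := by
  set m : ℝ := ∫ ω, X ω ∂P with hm_def
  have hm : 0 < m := hmean
  set A : ℝ := 1 - Real.exp (-m) - m * Real.exp (-m) with hA_def
  set C : ℝ := A / m ^ 2 with hC_def
  have hem : (0:ℝ) < Real.exp (-m) := Real.exp_pos _
  -- integrability of exp(-X)
  have hmeas : AEStronglyMeasurable (fun ω => Real.exp (-X ω)) P :=
    (Real.continuous_exp.comp continuous_neg).comp_aestronglyMeasurable hX1.aestronglyMeasurable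
  have hexpint : Integrable (fun ω => Real.exp (-X ω)) P := by
    refine Integrable.mono' (integrable_const 1) hmeas ?_
    filter_upwards with ω
    rw [Real.norm_eq_abs, abs_of_pos (Real.exp_pos _)]
    exact Real.exp_le_one_iff.mpr (neg_nonpos.mpr (hXnn ω))
  -- variance
  have hmem : MemLp X 2 P := (memLp_two_iff_integrable_sq hX1.aestronglyMeasurable).2 hX2
  have hvar : variance X P = (∫ ω, X ω ^ 2 ∂P) - m ^ 2 := by
    rw [variance_eq_sub hmem]
    rfl
  constructor
  · -- lower bound (Jensen via tangent line)
    have hlow : ∀ ω, Real.exp (-m) * (1 + m) + (-Real.exp (-m)) * X ω ≤ Real.exp (-X ω) := by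
      intro ω
      have h1 : (m - X ω) + 1 ≤ Real.exp (m - X ω) := Real.add_one_le_exp _
      have h2 : Real.exp (-m) * Real.exp (m - X ω) = Real.exp (-X ω) := by
        rw [← Real.exp_add]; ring_nf
      nlinarith [Real.exp_pos (-m)]
    have hint : Integrable (fun ω => Real.exp (-m) * (1 + m) + (-Real.exp (-m)) * X ω) P :=
      (integrable_const _).add (hX1.const_mul _)
    have h := integral_mono hint hexpint hlow
    rw [integral_add (integrable_const _) (hX1.const_mul _), integral_const,
      integral_const_mul, probReal_univ] at h
    simp only [ENNReal.toReal_one, smul_eq_mul, one_mul, ← hm_def] at h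
    nlinarith [h]
  · -- upper bound
    set c0 : ℝ := Real.exp (-m) + Real.exp (-m) * m + C * m ^ 2 with hc0_def
    set c1 : ℝ := -Real.exp (-m) - 2 * C * m with hc1_def
    have hkey : ∀ ω, Real.exp (-X ω) ≤ c0 + c1 * X ω + C * X ω ^ 2 := by
      intro ω
      have := jensen_gap_pointwise hm (hXnn ω)
      calc Real.exp (-X ω) ≤ Real.exp (-m) - Real.exp (-m) * (X ω - m)
            + C * (X ω - m) ^ 2 := this
        _ = c0 + c1 * X ω + C * X ω ^ 2 := by rw [hc0_def, hc1_def]; ring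
    have ia : Integrable (fun ω => c0 + c1 * X ω) P := (integrable_const c0).add (hX1.const_mul c1)
    have ib : Integrable (fun ω => C * X ω ^ 2) P := hX2.const_mul C
    have hint : Integrable (fun ω => c0 + c1 * X ω + C * X ω ^ 2) P := ia.add ib
    have h := integral_mono hexpint hint hkey
    rw [integral_add ia ib, integral_add (integrable_const c0) (hX1.const_mul c1), integral_const,
      integral_const_mul, integral_const_mul, probReal_univ] at h
    simp only [ENNReal.toReal_one, smul_eq_mul, one_mul, ← hm_def] at h
    have hXsq : C * (∫ ω, X ω ^ 2 ∂P) = C * (variance X P) + C * m ^ 2 := by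
      rw [hvar]; ring
    have hgoal : (∫ ω, Real.exp (-X ω) ∂P) - Real.exp (-m) ≤ C * variance X P := by
      rw [hc0_def, hc1_def] at h
      nlinarith [h, hXsq]
    calc (∫ ω, Real.exp (-X ω) ∂P) - Real.exp (-m) ≤ C * variance X P := hgoal
      _ = variance X P * A / m ^ 2 := by rw [hC_def]; ring
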